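/- If H is infinite-dimensional, then the cone of sums of squares equals the set of single hermitian squares: C_d = {r^* r : r ∈ A_d}. -/

import Mathlib

open ContinuousLinearMap

/-- Words of length at most `D` in the free monoid on `g` letters. -/
abbrev Word (g D : ℕ) := {l : List (Fin g) // l.length ≤ D}

noncomputable instance wordFintype (g D : ℕ) : Fintype (Word g D) :=
  haveI : Finite (Word g D) := (List.finite_length_le (Fin g) D).to_subtype
  Fintype.ofFinite _

/-- Membership in the cone `C_d`: the polynomial of degree `≤ 2d` with coefficients `P`
is a sum of `N(d)` hermitian squares `∑_{i=1}^{N(d)} r_i^* r_i` with `r_i` of degree `≤ d`. -/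
def IsSOS (g d : ℕ) (H : Type*) [NormedAddCommGroup H] [InnerProductSpace ℂ H]
    [CompleteSpace H] (P : Word g (2 * d) → (H →L[ℂ] H)) : Prop :=
  ∃ R : Fin (Fintype.card (Word g d)) → (Word g d → (H →L[ℂ] H)),
    ∀ u : Word g (2 * d), P u =
      ∑ i : Fin (Fintype.card (Word g d)), ∑ v : Word g d, ∑ w : Word g d,
        if v.1.reverse ++ w.1 = u.1 then
          (ContinuousLinearMap.adjoint (R i v)) ∘L (R i w) else 0

local notation "⟪" x ", " y "⟫" => @inner ℂ _ _ x y

lemma exists_shift_isometries (N : ℕ) (H : Type*) [NormedAddCommGroup H]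
    [InnerProductSpace ℂ H] [CompleteSpace H] (hinf : ¬ FiniteDimensional ℂ H) :
    ∃ J : Fin N → (H →L[ℂ] H),
      ∀ i j, adjoint (J i) ∘L J j = if i = j then (1 : H →L[ℂ] H) else 0 := by
  rcases Nat.eq_zero_or_pos N with hN | hN
  · subst hN
    exact ⟨fun i => i.elim0, fun i => i.elim0⟩
  obtain ⟨w, b, -⟩ := exists_hilbertBasis ℂ H
  haveI : Infinite w := by
    rw [← not_finite_iff_infinite]
    intro hfin
    haveI : Fintype w := Fintype.ofFinite w
    exact hinf (Module.Basis.finiteDimensional_of_finite b.toOrthonormalBasis.toBasis)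
  have hcard : Nonempty (Fin N × w ≃ w) := by
    rw [← Cardinal.eq]
    rw [Cardinal.mk_prod, Cardinal.mk_fin, Cardinal.lift_natCast, Cardinal.lift_id']
    exact Cardinal.mul_eq_right (Cardinal.aleph0_le_mk w)
      ((Cardinal.nat_lt_aleph0 N).le.trans (Cardinal.aleph0_le_mk w))
      (Nat.cast_ne_zero.mpr hN.ne')
  obtain ⟨e⟩ := hcard
  set v : Fin N → w → H := fun i k => b (e (i, k)) with hv_def
  have hv : ∀ i, Orthonormal ℂ (v i) := by
    intro i
    exact b.orthonormal.comp _ (fun k l h => by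
      have := e.injective h
      simpa using congrArg Prod.snd this)
  have hvo : ∀ (i j : Fin N) (k l : w), i ≠ j → ⟪v i k, v j l⟫ = 0 := by
    intro i j k l hij
    exact b.orthonormal.2 (e.injective.ne (by simp [Prod.ext_iff, hij]))
  set L : Fin N → (lp (fun _ : w => ℂ) 2 →ₗᵢ[ℂ] H) :=
    fun i => ((hv i).orthogonalFamily).linearIsometry with hL_def
  set J : Fin N → (H →L[ℂ] H) :=
    fun i => (L i).toContinuousLinearMap ∘L
      (b.repr.toContinuousLinearEquiv : H →L[ℂ] lp (fun _ : w => ℂ) 2) with hJ_def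
  have hJapp : ∀ i x, J i x = L i (b.repr x) := fun i x => rfl
  have hsum : ∀ (i : Fin N) (f : lp (fun _ : w => ℂ) 2),
      HasSum (fun k => f k • v i k) (L i f) := by
    intro i f
    exact ((hv i).orthogonalFamily).hasSum_linearIsometry f
  have hinner : ∀ i j x y, ⟪J i x, J j y⟫ = if i = j then ⟪x, y⟫ else 0 := by
    intro i j x y
    rw [hJapp, hJapp]
    split_ifs with h
    · subst h
      rw [(L i).inner_map_map, b.repr.inner_map_map]
    · have h1 : ∀ l : w, ⟪v j l, L i (b.repr x)⟫ = 0 := by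
        intro l
        have hs2 := (hsum i (b.repr x)).mapL (innerSL ℂ (v j l))
        refine hs2.unique ?_
        convert hasSum_zero with k
        simp only [innerSL_apply_apply, inner_smul_right, hvo j i l k (Ne.symm h), mul_zero]
      have hs3 := (hsum j (b.repr y)).mapL (innerSL ℂ (L i (b.repr x)))
      refine hs3.unique ?_
      convert hasSum_zero with l
      rw [innerSL_apply_apply, inner_smul_right, ← inner_conj_symm, h1 l, map_zero, mul_zero]
  refine ⟨J, fun i j => ?_⟩
  ext x
  refine ext_inner_left ℂ fun y => ?_
  rw [comp_apply, adjoint_inner_right, hinner]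
  split_ifs with h <;> simp

/-- If `H` is infinite-dimensional, then the cone of sums of squares equals the set of
single hermitian squares: `C_d = {r^* r : r ∈ A_d}`. -/
theorem stmt_11 (g d : ℕ) (H : Type*) [NormedAddCommGroup H] [InnerProductSpace ℂ H]
    [CompleteSpace H] (hinf : ¬ FiniteDimensional ℂ H)
    (P : Word g (2 * d) → (H →L[ℂ] H)) :
    IsSOS g d H P ↔
      ∃ r : Word g d → (H →L[ℂ] H),
        ∀ u : Word g (2 * d), P u =
          ∑ v : Word g d, ∑ w : Word g d,
            if v.1.reverse ++ w.1 = u.1 then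
              (ContinuousLinearMap.adjoint (r v)) ∘L (r w) else 0 := by
  constructor
  · rintro ⟨R, hR⟩
    obtain ⟨J, hJ⟩ := exists_shift_isometries (Fintype.card (Word g d)) H hinf
    set r : Word g d → (H →L[ℂ] H) := fun v => ∑ i : Fin (Fintype.card (Word g d)), J i ∘L R i v with hr_def
    have key : ∀ v w : Word g d, adjoint (r v) ∘L r w =
        ∑ i : Fin (Fintype.card (Word g d)), adjoint (R i v) ∘L R i w := by
      intro v w
      have hadj : adjoint (r v) = ∑ i : Fin (Fintype.card (Word g d)), adjoint (R i v) ∘L adjoint (J i) := by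
        rw [hr_def, map_sum]
        exact Finset.sum_congr rfl fun i _ => adjoint_comp _ _
      rw [hadj, hr_def]
      rw [ContinuousLinearMap.finset_sum_comp]
      refine Finset.sum_congr rfl fun i _ => ?_
      rw [ContinuousLinearMap.comp_finset_sum]
      rw [Finset.sum_eq_single i]
      · rw [ContinuousLinearMap.comp_assoc, ← ContinuousLinearMap.comp_assoc (adjoint (J i)),
          hJ i i, if_pos rfl, ContinuousLinearMap.one_def, ContinuousLinearMap.id_comp]
      · intro j _ hj
        rw [ContinuousLinearMap.comp_assoc, ← ContinuousLinearMap.comp_assoc (adjoint (J i)),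
          hJ i j, if_neg (Ne.symm hj), ContinuousLinearMap.zero_comp,
          ContinuousLinearMap.comp_zero]
      · intro hi; exact absurd (Finset.mem_univ i) hi
    refine ⟨r, fun u => ?_⟩
    rw [hR u, Finset.sum_comm]
    refine Finset.sum_congr rfl fun v _ => ?_
    rw [Finset.sum_comm]
    refine Finset.sum_congr rfl fun w _ => ?_
    rw [key v w]
    split_ifs with h
    · rfl
    · simp
  · rintro ⟨r, hr⟩
    haveI : Nonempty (Word g d) := ⟨⟨[], by simp⟩⟩
    have hNpos : 0 < Fintype.card (Word g d) := Fintype.card_pos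
    refine ⟨fun i => if i = (⟨0, hNpos⟩ : Fin (Fintype.card (Word g d))) then r
      else fun _ => 0, fun u => ?_⟩
    rw [Finset.sum_eq_single (⟨0, hNpos⟩ : Fin (Fintype.card (Word g d)))]
    · simpa using hr u
    · intro i _ hi
      simp only [if_neg hi]; simp
    · intro hi; exact absurd (Finset.mem_univ _) hi
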